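/- Let P(z) = Σ_{k=0}^m A_k z^k be a matrix polynomial with A_0 invertible. Set r₁ = min_{1 ≤ k ≤ m} { 2^{3(1−m)} C(2m, m+k) 𝒫_k² / (‖A_0^{-1}‖ ‖A_k‖) }^{1/k}, where 𝒫_k is the k-th Pell number. Then P has no eigenvalue in the open disk |z| < r₁. -/

import Mathlib

/-- Pell numbers. -/
def pell : ℕ → ℕ
  | 0 => 0
  | 1 => 1
  | (n + 2) => 2 * pell (n + 1) + pell n

noncomputable def sq2 : ℝ := Real.sqrt 2

lemma sq2_sq : sq2 ^ 2 = 2 := Real.sq_sqrt (by norm_num)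

lemma pell_closed : ∀ k : ℕ, (pell k : ℝ) * (2 * sq2) = (1 + sq2) ^ k - (1 - sq2) ^ k := by
  have key : ∀ k : ℕ, (pell k : ℝ) * (2 * sq2) = (1 + sq2) ^ k - (1 - sq2) ^ k ∧
      (pell (k+1) : ℝ) * (2 * sq2) = (1 + sq2) ^ (k+1) - (1 - sq2) ^ (k+1) := by
    intro k
    induction k with
    | zero => constructor <;> simp [pell] <;> ring
    | succ k ih =>
      refine ⟨ih.2, ?_⟩
      show (pell (k+2) : ℝ) * (2 * sq2) = _
      rw [pell]
      push_cast
      have h1 := ih.1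
      have h2 := ih.2
      linear_combination 2 * h2 + h1 + ((1 - sq2) ^ k - (1 + sq2) ^ k) * sq2_sq
  exact fun k => (key k).1

lemma pell_sq (k : ℕ) : 8 * (pell k : ℝ)^2 =
    ((1+sq2)^2)^k + ((1-sq2)^2)^k - 2*(-1:ℝ)^k := by
  have h := pell_closed k
  have h8 : (2*sq2)^2 = 8 := by linear_combination 4 * sq2_sq
  have hab : ((1+sq2)*(1-sq2)) = -1 := by linear_combination -sq2_sq
  have e1 : ((1+sq2)^2)^k = ((1+sq2)^k)^2 := by rw [← pow_mul, ← pow_mul, mul_comm]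
  have e2 : ((1-sq2)^2)^k = ((1-sq2)^k)^2 := by rw [← pow_mul, ← pow_mul, mul_comm]
  have e3 : (1+sq2)^k * (1-sq2)^k = (-1:ℝ)^k := by rw [← mul_pow, hab]
  calc 8 * (pell k : ℝ)^2 = ((pell k : ℝ) * (2*sq2))^2 := by rw [mul_pow, h8]; ring
    _ = ((1+sq2)^k - (1-sq2)^k)^2 := by rw [h]
    _ = ((1+sq2)^k)^2 + ((1-sq2)^k)^2 - 2*((1+sq2)^k * (1-sq2)^k) := by ring
    _ = _ := by rw [e1, e2, e3]


lemma pell_sum (m : ℕ) (hm : 1 ≤ m) :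
    ∑ k ∈ Finset.Icc 1 m, ((Nat.choose (2*m) (m+k) : ℝ) * (pell k : ℝ)^2)
      = 8^(m-1) := by
  obtain ⟨a, ha⟩ : ∃ x : ℝ, x = (1+sq2)^2 := ⟨_, rfl⟩
  obtain ⟨b, hb⟩ : ∃ x : ℝ, x = (1-sq2)^2 := ⟨_, rfl⟩
  have hpell : ∀ k : ℕ, 8 * (pell k : ℝ)^2 = a^k + b^k - 2*(-1:ℝ)^k := by
    intro k; rw [ha, hb]; exact pell_sq k
  have hab : a * b = 1 := by
    rw [ha, hb, ← mul_pow]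
    have h : ((1+sq2)*(1-sq2)) = -1 := by linear_combination -sq2_sq
    rw [h]; norm_num
  have ha8 : (a+1)^2 = 8*a := by
    rw [ha]; linear_combination (sq2^2 + 4*sq2 + 2) * sq2_sq
  have hb8 : (b+1)^2 = 8*b := by
    rw [hb]; linear_combination (sq2^2 - 4*sq2 + 2) * sq2_sq
  set f : ℕ → ℝ :=
    fun j => (Nat.choose (2*m) j : ℝ) * (a^j * b^m + b^j * a^m - 2*(-1:ℝ)^(j+m)) with hf
  have habm : a^m * b^m = 1 := by rw [← mul_pow, hab, one_pow]
  have hfm : f m = 0 := by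
    have h1 : (-1:ℝ)^(m+m) = 1 := by
      rw [show m+m = 2*m by omega, pow_mul]; norm_num
    have h2 : b^m * a^m = 1 := by rw [mul_comm]; exact habm
    simp only [hf, habm, h1, h2]
    ring
  have hfk : ∀ k : ℕ, f (m+1+k)
      = (Nat.choose (2*m) (m+(k+1)) : ℝ) * (8 * (pell (k+1) : ℝ)^2) := by
    intro k
    have key : a^(m+1+k) * b^m + b^(m+1+k) * a^m = a^(k+1) + b^(k+1) := by
      have e1 : a^(m+1+k) = a^m * a^(k+1) := by rw [← pow_add]; congr 1; omega
      have e2 : b^(m+1+k) = b^m * b^(k+1) := by rw [← pow_add]; congr 1; omega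
      rw [e1, e2]
      calc a^m * a^(k+1) * b^m + b^m * b^(k+1) * a^m
          = (a^m * b^m) * a^(k+1) + (a^m * b^m) * b^(k+1) := by ring
        _ = a^(k+1) + b^(k+1) := by rw [habm]; ring
    have hsgn : (-1:ℝ)^(m+1+k+m) = (-1:ℝ)^(k+1) := by
      rw [show m+1+k+m = (k+1)+2*m by omega, pow_add (-1:ℝ) (k+1) (2*m), pow_mul]
      norm_num
    have harg : m+(k+1) = m+1+k := by omega
    simp only [hf, harg]
    rw [key, hsgn, hpell (k+1)]
  have hsym : ∀ j : ℕ, j ≤ m → f (m-j) = f (m+j) := by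
    intro j hj
    have hch : (Nat.choose (2*m) (m-j)) = Nat.choose (2*m) (m+j) := by
      have h1 : m + j ≤ 2*m := by omega
      have h2 := Nat.choose_symm h1
      rwa [show 2*m - (m+j) = m - j by omega] at h2
    have hone : (1:ℝ) = a^j * b^j := by rw [← mul_pow, hab, one_pow]
    have hjj : m - j + j = m := by omega
    have e1 : a^(m-j) * b^m = a^m * b^(m+j) := by
      calc a^(m-j) * b^m = a^(m-j) * b^m * (a^j * b^j) := by rw [← hone, mul_one]
        _ = (a^(m-j) * a^j) * (b^m * b^j) := by ring
        _ = a^m * b^(m+j) := by rw [← pow_add, ← pow_add, hjj]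
    have e2 : b^(m-j) * a^m = b^m * a^(m+j) := by
      calc b^(m-j) * a^m = b^(m-j) * a^m * (a^j * b^j) := by rw [← hone, mul_one]
        _ = (b^(m-j) * b^j) * (a^m * a^j) := by ring
        _ = b^m * a^(m+j) := by rw [← pow_add, ← pow_add, hjj]
    have esgn : (-1:ℝ)^(m-j+m) = (-1:ℝ)^(m+j+m) := by
      rw [show m+j+m = (m-j+m)+2*j by omega, pow_add (-1:ℝ) (m-j+m) (2*j), pow_mul]
      norm_num
    simp only [hf, hch, e1, e2, esgn]
    ring
  have hbin : ∀ x : ℝ, ∑ j ∈ Finset.range (2*m+1), x^j * (Nat.choose (2*m) j : ℝ)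
      = (x+1)^(2*m) := by
    intro x
    rw [add_pow]
    simp
  have hT : ∑ j ∈ Finset.range (2*m+1), f j = 2 * 8^m := by
    have expand : ∀ j, f j = b^m * (a^j * (Nat.choose (2*m) j : ℝ))
        + a^m * (b^j * (Nat.choose (2*m) j : ℝ))
        - 2*(-1:ℝ)^m * ((-1:ℝ)^j * (Nat.choose (2*m) j : ℝ)) := by
      intro j; simp only [hf, pow_add]; ring
    calc ∑ j ∈ Finset.range (2*m+1), f j
        = b^m * (∑ j ∈ Finset.range (2*m+1), a^j * (Nat.choose (2*m) j : ℝ))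
          + a^m * (∑ j ∈ Finset.range (2*m+1), b^j * (Nat.choose (2*m) j : ℝ))
          - 2*(-1:ℝ)^m * (∑ j ∈ Finset.range (2*m+1), (-1:ℝ)^j * (Nat.choose (2*m) j : ℝ)) := by
          simp only [Finset.sum_congr rfl (fun j _ => expand j), Finset.sum_sub_distrib,
            Finset.sum_add_distrib, Finset.mul_sum]
      _ = b^m * (a+1)^(2*m) + a^m * (b+1)^(2*m) - 2*(-1:ℝ)^m * ((-1)+1)^(2*m) := by
          rw [hbin, hbin, hbin]
      _ = 2 * 8^m := by
          have h0 : ((-1:ℝ)+1)^(2*m) = 0 := by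
            rw [show ((-1:ℝ)+1) = 0 by ring, zero_pow (by omega)]
          rw [h0, pow_mul (a+1) 2 m, pow_mul (b+1) 2 m, ha8, hb8,
            ← mul_pow, ← mul_pow, show b*(8*a) = 8*(a*b) by ring,
            show a*(8*b) = 8*(a*b) by ring, hab, mul_one]
          ring
  have h1 : ∑ j ∈ Finset.Ico m (2*m+1), f j = ∑ i ∈ Finset.range (m+1), f (m+i) := by
    rw [Finset.sum_Ico_eq_sum_range, show 2*m+1-m = m+1 by omega]
  have h2 : ∑ i ∈ Finset.range (m+1), f (m+i) = ∑ i ∈ Finset.range m, f (m+1+i) := by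
    rw [Finset.sum_range_succ']
    rw [show m+0 = m by omega, hfm, add_zero]
    exact Finset.sum_congr rfl fun i _ => by rw [show m+(i+1) = m+1+i by omega]
  have h3 : ∑ j ∈ Finset.range m, f j = ∑ i ∈ Finset.range m, f (m+1+i) := by
    calc ∑ j ∈ Finset.range m, f j
        = ∑ j ∈ Finset.range m, f (m+1+(m-1-j)) := Finset.sum_congr rfl (fun j hj => by
          rw [Finset.mem_range] at hj
          rw [show m+1+(m-1-j) = m + (m-j) by omega]
          have h := hsym (m-j) (by omega)
          rw [show m - (m-j) = j by omega] at h
          exact h)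
      _ = ∑ j ∈ Finset.range m, f (m+1+j) :=
          Finset.sum_range_reflect (fun j => f (m+1+j)) m
  have hdec : ∑ j ∈ Finset.range (2*m+1), f j = 2 * ∑ i ∈ Finset.range m, f (m+1+i) := by
    have hsplit : ∑ j ∈ Finset.range (2*m+1), f j
        = ∑ j ∈ Finset.range m, f j + ∑ j ∈ Finset.Ico m (2*m+1), f j := by
      exact (Finset.sum_range_add_sum_Ico f (by omega : m ≤ 2*m+1)).symm
    rw [hsplit, h1, h2, h3]
    ring
  have h8S : ∑ i ∈ Finset.range m, f (m+1+i)
      = 8 * ∑ k ∈ Finset.Icc 1 m, (Nat.choose (2*m) (m+k) : ℝ) * (pell k : ℝ)^2 := by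
    rw [Finset.mul_sum,
      show Finset.Icc 1 m = Finset.Ico 1 (m+1) by rw [Finset.Ico_add_one_right_eq_Icc],
      Finset.sum_Ico_eq_sum_range]
    simp only [Nat.add_sub_cancel]
    refine Finset.sum_congr rfl fun i _ => ?_
    rw [hfk i, show 1+i = i+1 by omega]
    ring
  have hfin : 8 * ∑ k ∈ Finset.Icc 1 m, (Nat.choose (2*m) (m+k) : ℝ) * (pell k : ℝ)^2
      = 8 * 8^(m-1) := by
    have hTT := hT
    rw [hdec, h8S] at hTT
    have h8m : (8:ℝ)^m = 8 * 8^(m-1) := by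
      conv_lhs => rw [show m = (m-1)+1 by omega]
      rw [pow_succ]; ring
    linarith [hTT, h8m]
  exact mul_left_cancel₀ (by norm_num : (8:ℝ) ≠ 0) hfin


/-- Operator norm of a complex matrix, subordinate to the Euclidean vector norm. -/
noncomputable def opNorm {n : ℕ} (A : Matrix (Fin n) (Fin n) ℂ) : ℝ :=
  ‖Matrix.toEuclideanCLM (𝕜 := ℂ) A‖

/-- Theorem 3 (lower bound): with `A_0` invertible and
`r₁ = min_k {2^{3(1−m)} C(2m,m+k) 𝒫_k² / (‖A_0⁻¹‖‖A_k‖)}^{1/k}` (the minimum taken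
over `1 ≤ k ≤ m` with `‖A_k‖ ≠ 0`), the matrix polynomial `P(z) = ∑_k A_k z^k` has
no eigenvalue in `|z| < r₁`. -/
theorem matrixPoly_eigenvalue_lower_bound_pell {n : ℕ} (m : ℕ)
    (A : ℕ → Matrix (Fin n) (Fin n) ℂ) (hA0 : IsUnit (A 0).det)
    (hne : (((Finset.Icc 1 m)).filter fun k => opNorm (A k) ≠ 0).Nonempty)
    (r₁ : ℝ)
    (hr₁ : r₁ = (((Finset.Icc 1 m)).filter fun k => opNorm (A k) ≠ 0).inf' hne
        fun k => ((2 : ℝ) ^ ((3 : ℤ) * (1 - (m : ℤ))) * (Nat.choose (2 * m) (m + k))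
            * (pell k : ℝ) ^ 2 / (opNorm (A 0)⁻¹ * opNorm (A k)))
          ^ ((1 : ℝ) / k))
    (lam : ℂ) (u : Fin n → ℂ) (hu : u ≠ 0)
    (hlam : (∑ k ∈ Finset.range (m + 1), lam ^ k • A k).mulVec u = 0) :
    r₁ ≤ ‖lam‖ := by
  by_contra hcon
  push_neg at hcon
  classical
  obtain ⟨k0, hk0⟩ := hne
  have hk0' := Finset.mem_filter.mp hk0
  have hk0'' := Finset.mem_Icc.mp hk0'.1
  have hm1 : 1 ≤ m := le_trans hk0''.1 hk0''.2
  set ρ := ‖lam‖ with hρdef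
  have hρ0 : (0:ℝ) ≤ ρ := norm_nonneg _
  set v : EuclideanSpace ℂ (Fin n) := (WithLp.equiv 2 (Fin n → ℂ)).symm u with hvdef
  have hv0 : v ≠ 0 := by
    intro h
    apply hu
    have h2 := congrArg (WithLp.equiv 2 (Fin n → ℂ)) h
    simpa [hvdef] using h2
  set T : ℕ → EuclideanSpace ℂ (Fin n) →L[ℂ] EuclideanSpace ℂ (Fin n) :=
    fun k => Matrix.toEuclideanCLM (𝕜 := ℂ) (A k) with hTdef
  set B : EuclideanSpace ℂ (Fin n) →L[ℂ] EuclideanSpace ℂ (Fin n) :=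
    Matrix.toEuclideanCLM (𝕜 := ℂ) (A 0)⁻¹ with hBdef
  have hsum : ∑ k ∈ Finset.range (m+1), lam^k • (T k v) = 0 := by
    have h1 : Matrix.toEuclideanCLM (𝕜 := ℂ)
        (∑ k ∈ Finset.range (m+1), lam^k • A k) v = 0 := by
      change Matrix.toEuclideanCLM (𝕜 := ℂ) _ (WithLp.toLp 2 u) = 0
      rw [Matrix.toEuclideanCLM_toLp, hlam]
      simp
    rw [map_sum] at h1
    simp only [map_smul] at h1
    simpa [ContinuousLinearMap.sum_apply, ContinuousLinearMap.smul_apply, hTdef] using h1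
  have hBT : ∀ x, B (T 0 x) = x := by
    intro x
    have hinv : (A 0)⁻¹ * (A 0) = 1 := Matrix.nonsing_inv_mul _ hA0
    have h2 : Matrix.toEuclideanCLM (𝕜 := ℂ) ((A 0)⁻¹ * A 0)
        = Matrix.toEuclideanCLM (𝕜 := ℂ) (1 : Matrix (Fin n) (Fin n) ℂ) := by rw [hinv]
    rw [map_mul, map_one] at h2
    calc B (T 0 x) = (B * T 0) x := rfl
      _ = (1 : EuclideanSpace ℂ (Fin n) →L[ℂ] EuclideanSpace ℂ (Fin n)) x := by rw [h2]
      _ = x := rfl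
  have key1 : ‖v‖ ≤ opNorm (A 0)⁻¹ * ‖T 0 v‖ := by
    conv_lhs => rw [← hBT v]
    exact B.le_opNorm _
  have hT0 : T 0 v = - ∑ k ∈ Finset.Icc 1 m, lam^k • T k v := by
    have h4 := hsum
    rw [Finset.sum_range_succ'] at h4
    simp only [pow_zero, one_smul] at h4
    have h5 : ∑ k ∈ Finset.Icc 1 m, lam^k • T k v
        = ∑ i ∈ Finset.range m, lam^(i+1) • T (i+1) v := by
      rw [show Finset.Icc 1 m = Finset.Ico 1 (m+1) by rw [Finset.Ico_add_one_right_eq_Icc],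
        Finset.sum_Ico_eq_sum_range]
      simp only [Nat.add_sub_cancel]
      exact Finset.sum_congr rfl fun i _ => by rw [show 1+i = i+1 by omega]
    rw [h5]
    exact eq_neg_of_add_eq_zero_right h4
  have hbound : ‖T 0 v‖ ≤ ∑ k ∈ Finset.Icc 1 m, ρ^k * (opNorm (A k) * ‖v‖) := by
    rw [hT0, norm_neg]
    refine le_trans (norm_sum_le _ _) (Finset.sum_le_sum fun k _ => ?_)
    rw [norm_smul, norm_pow]
    exact mul_le_mul_of_nonneg_left ((T k).le_opNorm v) (pow_nonneg hρ0 k)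
  have hNnn : ∀ j, (0:ℝ) ≤ opNorm (A j)⁻¹ ∧ (0:ℝ) ≤ opNorm (A j) := by
    intro j
    constructor <;> exact norm_nonneg _
  set S : ℝ := ∑ k ∈ Finset.Icc 1 m, opNorm (A 0)⁻¹ * opNorm (A k) * ρ^k with hSdef
  have main : ‖v‖ ≤ S * ‖v‖ := by
    calc ‖v‖ ≤ opNorm (A 0)⁻¹ * ‖T 0 v‖ := key1
      _ ≤ opNorm (A 0)⁻¹ * ∑ k ∈ Finset.Icc 1 m, ρ^k * (opNorm (A k) * ‖v‖) :=
          mul_le_mul_of_nonneg_left hbound (hNnn 0).1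
      _ = S * ‖v‖ := by
          rw [hSdef, Finset.mul_sum, Finset.sum_mul]
          exact Finset.sum_congr rfl fun k _ => by ring
  have hvpos : 0 < ‖v‖ := norm_pos_iff.mpr hv0
  have hN0 : 0 < opNorm (A 0)⁻¹ := by
    rcases lt_or_ge 0 (opNorm (A 0)⁻¹) with h | h
    · exact h
    · exfalso
      have h6 : ‖v‖ ≤ 0 := le_trans key1 (mul_nonpos_of_nonpos_of_nonneg h (norm_nonneg _))
      linarith
  have hterm : ∀ k ∈ (((Finset.Icc 1 m)).filter fun k => opNorm (A k) ≠ 0),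
      opNorm (A 0)⁻¹ * opNorm (A k) * ρ^k
      < (2:ℝ)^((3:ℤ)*(1-(m:ℤ))) * (Nat.choose (2*m) (m+k) : ℝ) * (pell k : ℝ)^2 := by
    intro k hk
    obtain ⟨hkI, hkne⟩ := Finset.mem_filter.mp hk
    obtain ⟨hk1, hkm⟩ := Finset.mem_Icc.mp hkI
    have hNk : 0 < opNorm (A k) := lt_of_le_of_ne (norm_nonneg _) (Ne.symm hkne)
    have hNN : 0 < opNorm (A 0)⁻¹ * opNorm (A k) := mul_pos hN0 hNk
    set c : ℝ := (2:ℝ)^((3:ℤ)*(1-(m:ℤ))) * (Nat.choose (2*m) (m+k) : ℝ) * (pell k:ℝ)^2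
        / (opNorm (A 0)⁻¹ * opNorm (A k)) with hcdef
    have hr : r₁ ≤ c ^ ((1:ℝ)/k) := by
      rw [hr₁]
      exact Finset.inf'_le _ hk
    have hcnn : (0:ℝ) ≤ c := by
      rw [hcdef]
      positivity
    have hkne0 : (k:ℝ) ≠ 0 := Nat.cast_ne_zero.mpr (by omega)
    have hρc : ρ < c ^ ((1:ℝ)/k) := lt_of_lt_of_le hcon hr
    have hpow : ρ^k < c := by
      have h6 : ρ^k < (c ^ ((1:ℝ)/k))^k := pow_lt_pow_left₀ hρc hρ0 (by omega)
      have h7 : (c ^ ((1:ℝ)/k))^k = c := by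
        rw [← Real.rpow_natCast (c ^ ((1:ℝ)/k)) k, ← Real.rpow_mul hcnn, one_div,
          inv_mul_cancel₀ hkne0, Real.rpow_one]
      rwa [h7] at h6
    calc opNorm (A 0)⁻¹ * opNorm (A k) * ρ^k
        = ρ^k * (opNorm (A 0)⁻¹ * opNorm (A k)) := by ring
      _ < _ := (lt_div_iff₀ hNN).mp hpow
  have hsumF : S = ∑ k ∈ (((Finset.Icc 1 m)).filter fun k => opNorm (A k) ≠ 0),
      opNorm (A 0)⁻¹ * opNorm (A k) * ρ^k := by
    rw [hSdef]
    refine (Finset.sum_filter_of_ne ?_).symm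
    intro k hk hne0 h0
    apply hne0
    rw [h0, mul_zero, zero_mul]
  have hdsum : ∑ k ∈ Finset.Icc 1 m,
      (2:ℝ)^((3:ℤ)*(1-(m:ℤ))) * (Nat.choose (2*m) (m+k) : ℝ) * (pell k:ℝ)^2 = 1 := by
    have h8 : ∑ k ∈ Finset.Icc 1 m,
        (2:ℝ)^((3:ℤ)*(1-(m:ℤ))) * (Nat.choose (2*m) (m+k) : ℝ) * (pell k:ℝ)^2
        = (2:ℝ)^((3:ℤ)*(1-(m:ℤ)))
          * ∑ k ∈ Finset.Icc 1 m, (Nat.choose (2*m) (m+k) : ℝ) * (pell k:ℝ)^2 := by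
      rw [Finset.mul_sum]
      exact Finset.sum_congr rfl fun k _ => by ring
    rw [h8, pell_sum m hm1]
    have h9 : (8:ℝ)^(m-1) = (8:ℝ)^(((m:ℤ))-1) := by
      rw [← zpow_natCast]
      congr 1
      omega
    have h10 : (2:ℝ)^((3:ℤ)*(1-(m:ℤ))) = (8:ℝ)^((1:ℤ)-(m:ℤ)) := by
      rw [zpow_mul]
      norm_num
    rw [h9, h10, ← zpow_add₀ (by norm_num : (8:ℝ) ≠ 0),
      show (1:ℤ)-(m:ℤ)+((m:ℤ)-1) = 0 by ring, zpow_zero]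
  have hS1 : S < 1 := by
    rw [hsumF]
    calc ∑ k ∈ (((Finset.Icc 1 m)).filter fun k => opNorm (A k) ≠ 0),
          opNorm (A 0)⁻¹ * opNorm (A k) * ρ^k
        < ∑ k ∈ (((Finset.Icc 1 m)).filter fun k => opNorm (A k) ≠ 0),
          (2:ℝ)^((3:ℤ)*(1-(m:ℤ))) * (Nat.choose (2*m) (m+k) : ℝ) * (pell k : ℝ)^2 :=
          Finset.sum_lt_sum_of_nonempty ⟨k0, hk0⟩ hterm
      _ ≤ ∑ k ∈ Finset.Icc 1 m,
          (2:ℝ)^((3:ℤ)*(1-(m:ℤ))) * (Nat.choose (2*m) (m+k) : ℝ) * (pell k : ℝ)^2 :=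
          Finset.sum_le_sum_of_subset_of_nonneg (Finset.filter_subset _ _)
            (fun k _ _ => by positivity)
      _ = 1 := hdsum
  have hfinal : ‖v‖ < ‖v‖ :=
    lt_of_le_of_lt main (by
      calc S * ‖v‖ < 1 * ‖v‖ := mul_lt_mul_of_pos_right hS1 hvpos
        _ = ‖v‖ := one_mul _)
  exact lt_irrefl _ hfinal
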